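/- Let λ > 0 and 1 ≤ k < l ≤ n with N(k,l) ≤ λ. Then: (i) every x with k ≤ x ≤ l lies in K ∪ L; (ii) c_{k,l}(x,y) ≤ λ for all x, y ∈ K; (iii) c_{k,l}(x,y) ≤ λ for all x, y ∈ L; (iv) c_{k,l}(x,y) ≤ λ for all x ∈ K ∩ L and all y with k ≤ y ≤ l. -/
import Mathlib


noncomputable section

variable {X : Type*} [MetricSpace X]

/-- Path distance between vertices `i` and `j` of the path `p₁, …, pₙ`:
the sum of the edge weights `d(p_t, p_{t+1})` for `min i j ≤ t < max i j`. -/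
def pathDist (p : ℕ → X) (i j : ℕ) : ℝ :=
  ∑ t ∈ Finset.Ico (min i j) (max i j), dist (p t) (p (t + 1))

/-- Shortest-path distance between vertices `x` and `y` in the unicyclic graph
`P̄[k,l]` obtained by adding the shortcut `(p_k, p_l)` of weight `d(p_k, p_l)`. -/
def pbar (p : ℕ → X) (k l x y : ℕ) : ℝ :=
  min (pathDist p x y)
    (min (pathDist p x k + dist (p k) (p l) + pathDist p l y)
         (pathDist p x l + dist (p k) (p l) + pathDist p k y))

/-- The length `|C[k,l]|` of the cycle `C[k,l]`. -/
def cycleLen (p : ℕ → X) (k l : ℕ) : ℝ :=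
  pathDist p k l + dist (p k) (p l)

/-- The cycle distance `c_{k,l}(x,y)` for `k ≤ x, y ≤ l`. -/
def cycDist (p : ℕ → X) (k l x y : ℕ) : ℝ :=
  min (pathDist p x y) (cycleLen p k l - pathDist p x y)

/-- `S(k,l) = max_{k ≤ x ≤ l} p̄_{k,l}(1,x)`. -/
def Sfun (p : ℕ → X) (k l : ℕ) : ℝ :=
  sSup ((fun x => pbar p k l 1 x) '' Set.Icc k l)

/-- `E(k,l) = max_{k ≤ x ≤ l} p̄_{k,l}(x,n)`. -/
def Efun (p : ℕ → X) (n k l : ℕ) : ℝ :=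
  sSup ((fun x => pbar p k l x n) '' Set.Icc k l)

/-- `U(k,l) = p̄_{k,l}(1,n)`. -/
def Ufun (p : ℕ → X) (n k l : ℕ) : ℝ :=
  pbar p k l 1 n

/-- `O(k,l) = max_{k ≤ x < y ≤ l} c_{k,l}(x,y)`. -/
def Ofun (p : ℕ → X) (k l : ℕ) : ℝ :=
  sSup {r | ∃ x y : ℕ, k ≤ x ∧ x < y ∧ y ≤ l ∧ r = cycDist p k l x y}

/-- `N(k,l) = max (S(k,l), E(k,l), U(k,l))`. -/
def Nfun (p : ℕ → X) (n k l : ℕ) : ℝ :=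
  max (Sfun p k l) (max (Efun p n k l) (Ufun p n k l))

/-- `M(k,l) = max_{1 ≤ x < y ≤ n} p̄_{k,l}(x,y)`, the diameter of `P̄[k,l]`. -/
def Mfun (p : ℕ → X) (n k l : ℕ) : ℝ :=
  sSup {r | ∃ x y : ℕ, 1 ≤ x ∧ x < y ∧ y ≤ n ∧ r = pbar p k l x y}


lemma pathDist_nonneg (p : ℕ → X) (i j : ℕ) : 0 ≤ pathDist p i j :=
  Finset.sum_nonneg fun _ _ => dist_nonneg

lemma pathDist_comm (p : ℕ → X) (i j : ℕ) : pathDist p i j = pathDist p j i := by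
  simp [pathDist, min_comm, max_comm]

lemma pathDist_add (p : ℕ → X) {i j m : ℕ} (h1 : i ≤ j) (h2 : j ≤ m) :
    pathDist p i m = pathDist p i j + pathDist p j m := by
  unfold pathDist
  rw [min_eq_left (h1.trans h2), max_eq_right (h1.trans h2), min_eq_left h1,
    max_eq_right h1, min_eq_left h2, max_eq_right h2, Finset.sum_Ico_consecutive _ h1 h2]

lemma pathDist_le_of_between (p : ℕ → X) {a x y : ℕ} (ha : a ≤ x) (hxy : x ≤ y) :
    pathDist p x y ≤ pathDist p a y := by
  have := pathDist_add p ha hxy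
  have := pathDist_nonneg p a x
  linarith

lemma pathDist_between_le (p : ℕ → X) {a x y : ℕ} (hax : a ≤ x) (hay : a ≤ y)
    {lam : ℝ} (hx : pathDist p a x ≤ lam) (hy : pathDist p a y ≤ lam) :
    pathDist p x y ≤ lam := by
  rcases le_total x y with h | h
  · exact (pathDist_le_of_between p hax h).trans hy
  · rw [pathDist_comm]
    exact (pathDist_le_of_between p hay h).trans hx

lemma pathDist_between_le' (p : ℕ → X) {b x y : ℕ} (hxb : x ≤ b) (hyb : y ≤ b)
    {lam : ℝ} (hx : pathDist p x b ≤ lam) (hy : pathDist p y b ≤ lam) :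
    pathDist p x y ≤ lam := by
  rcases le_total x y with h | h
  · have := pathDist_add p h hyb
    have := pathDist_nonneg p y b
    linarith
  · have := pathDist_add p h hxb
    have := pathDist_nonneg p x b
    rw [pathDist_comm]
    linarith

/-- Let `λ > 0` and `1 ≤ k < l ≤ n` with `N(k,l) ≤ λ`. Then:
(i) every `x` with `k ≤ x ≤ l` lies in `K ∪ L`;
(ii) `c_{k,l}(x,y) ≤ λ` for all `x, y ∈ K`;
(iii) `c_{k,l}(x,y) ≤ λ` for all `x, y ∈ L`;
(iv) `c_{k,l}(x,y) ≤ λ` for all `x ∈ K ∩ L` and all `y` with `k ≤ y ≤ l`. -/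
theorem cycle_properties_of_KL {X : Type*} [MetricSpace X]
    (n : ℕ) (hn : 2 ≤ n) (p : ℕ → X)
    (k l : ℕ) (hk : 1 ≤ k) (hkl : k < l) (hl : l ≤ n)
    (lam : ℝ) (hlam : 0 < lam) (hN : Nfun p n k l ≤ lam) :
    (∀ x : ℕ, k ≤ x → x ≤ l →
        x ∈ ({x : ℕ | k ≤ x ∧ x ≤ l ∧ pathDist p k x ≤ lam} ∪
             {x : ℕ | k ≤ x ∧ x ≤ l ∧ pathDist p x l ≤ lam})) ∧
    (∀ x ∈ {x : ℕ | k ≤ x ∧ x ≤ l ∧ pathDist p k x ≤ lam},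
      ∀ y ∈ {x : ℕ | k ≤ x ∧ x ≤ l ∧ pathDist p k x ≤ lam},
        cycDist p k l x y ≤ lam) ∧
    (∀ x ∈ {x : ℕ | k ≤ x ∧ x ≤ l ∧ pathDist p x l ≤ lam},
      ∀ y ∈ {x : ℕ | k ≤ x ∧ x ≤ l ∧ pathDist p x l ≤ lam},
        cycDist p k l x y ≤ lam) ∧
    (∀ x ∈ ({x : ℕ | k ≤ x ∧ x ≤ l ∧ pathDist p k x ≤ lam} ∩
            {x : ℕ | k ≤ x ∧ x ≤ l ∧ pathDist p x l ≤ lam}),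
      ∀ y : ℕ, k ≤ y → y ≤ l → cycDist p k l x y ≤ lam) := by
  have hS : Sfun p k l ≤ lam := (le_max_left _ _).trans hN
  -- From S ≤ lam, every x in [k,l] has small pathDist to k or to l.
  have key : ∀ x : ℕ, k ≤ x → x ≤ l → pathDist p k x ≤ lam ∨ pathDist p x l ≤ lam := by
    intro x hkx hxl
    have hmem : pbar p k l 1 x ∈ ((fun x => pbar p k l 1 x) '' Set.Icc k l) :=
      Set.mem_image_of_mem _ (Set.mem_Icc.mpr ⟨hkx, hxl⟩)
    have hbdd : BddAbove ((fun x => pbar p k l 1 x) '' Set.Icc k l) :=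
      ((Set.finite_Icc k l).image _).bddAbove
    have hx : pbar p k l 1 x ≤ lam := (le_csSup hbdd hmem).trans hS
    unfold pbar at hx
    have h1k : (1 : ℕ) ≤ k := hk
    have hd : 0 ≤ dist (p k) (p l) := dist_nonneg
    have h1 : pathDist p k x ≤ pathDist p 1 x := pathDist_le_of_between p h1k hkx
    have h2 : pathDist p x l ≤ pathDist p 1 k + dist (p k) (p l) + pathDist p l x := by
      rw [pathDist_comm p x l]
      have := pathDist_nonneg p 1 k
      linarith
    have h3 : pathDist p k x ≤ pathDist p 1 l + dist (p k) (p l) + pathDist p k x := by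
      have := pathDist_nonneg p 1 l
      linarith
    rcases le_or_gt (pathDist p 1 x) (min (pathDist p 1 k + dist (p k) (p l) + pathDist p l x)
        (pathDist p 1 l + dist (p k) (p l) + pathDist p k x)) with h | h
    · rw [min_eq_left h] at hx
      exact Or.inl (h1.trans hx)
    · rw [min_eq_right h.le] at hx
      rcases le_total (pathDist p 1 k + dist (p k) (p l) + pathDist p l x)
          (pathDist p 1 l + dist (p k) (p l) + pathDist p k x) with h' | h'
      · rw [min_eq_left h'] at hx
        exact Or.inr (h2.trans hx)
      · rw [min_eq_right h'] at hx
        exact Or.inl (h3.trans hx)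
  have hii : ∀ x ∈ {x : ℕ | k ≤ x ∧ x ≤ l ∧ pathDist p k x ≤ lam},
      ∀ y ∈ {x : ℕ | k ≤ x ∧ x ≤ l ∧ pathDist p k x ≤ lam}, cycDist p k l x y ≤ lam := by
    rintro x ⟨hkx, _, hx⟩ y ⟨hky, _, hy⟩
    exact (min_le_left _ _).trans (pathDist_between_le p hkx hky hx hy)
  have hiii : ∀ x ∈ {x : ℕ | k ≤ x ∧ x ≤ l ∧ pathDist p x l ≤ lam},
      ∀ y ∈ {x : ℕ | k ≤ x ∧ x ≤ l ∧ pathDist p x l ≤ lam}, cycDist p k l x y ≤ lam := by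
    rintro x ⟨_, hxl, hx⟩ y ⟨_, hyl, hy⟩
    exact (min_le_left _ _).trans (pathDist_between_le' p hxl hyl hx hy)
  refine ⟨?_, hii, hiii, ?_⟩
  · intro x hkx hxl
    rcases key x hkx hxl with h | h
    · exact Or.inl ⟨hkx, hxl, h⟩
    · exact Or.inr ⟨hkx, hxl, h⟩
  · rintro x ⟨hxK, hxL⟩ y hky hyl
    rcases key y hky hyl with h | h
    · exact hii x hxK y ⟨hky, hyl, h⟩
    · exact hiii x hxL y ⟨hky, hyl, h⟩
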